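/- Let φ: ℙ¹ → ℙ¹ be a morphism defined over K with good reduction at a place v, and let P ∈ ℙ¹(K) be a periodic point for φ with minimal period n. If i, j ∈ ℕ satisfy gcd(i − j, n) = 1, then δ_v(φ^i(P), φ^j(P)) = δ_v(φ(P), P). -/

import Mathlib

noncomputable section

/-- The `v`-adic logarithmic distance between coordinate representatives of points of
`ℙ¹(K)`. -/
def logDist {K : Type} [Field K] (v : K → WithTop ℤ) (P Q : K × K) : WithTop ℤ :=
  v (P.1 * Q.2 - Q.1 * P.2) - min (v P.1) (v P.2) - min (v Q.1) (v Q.2)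

/-- Evaluation at a point of the pair of binary forms
`F(X,Y) = ∑ aᵢ Xⁱ Y^(d−i)`, `G(X,Y) = ∑ bᵢ Xⁱ Y^(d−i)` of degree `d`,
i.e. the map `φ([X:Y]) = [F(X,Y):G(X,Y)]` in homogeneous coordinates. -/
def evalPair {K : Type} [CommRing K] (d : ℕ) (a b : Fin (d+1) → K) (P : K × K) : K × K :=
  (∑ i : Fin (d+1), a i * P.1 ^ (i:ℕ) * P.2 ^ (d - (i:ℕ)),
   ∑ i : Fin (d+1), b i * P.1 ^ (i:ℕ) * P.2 ^ (d - (i:ℕ)))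

/-- The Sylvester matrix of the two binary forms of degree `d` with coefficient
vectors `a`, `b`. -/
def sylvester {K : Type} [CommRing K] (d : ℕ) (a b : Fin (d+1) → K) :
    Matrix (Fin (d+d)) (Fin (d+d)) K :=
  fun i j =>
    if _ : (i:ℕ) < d then
      if hj : (i:ℕ) ≤ (j:ℕ) ∧ (j:ℕ) ≤ (i:ℕ) + d then a ⟨(j:ℕ) - (i:ℕ), by omega⟩ else 0
    else
      if hj : (i:ℕ) - d ≤ (j:ℕ) ∧ (j:ℕ) ≤ (i:ℕ) then b ⟨(j:ℕ) - ((i:ℕ) - d), by omega⟩ else 0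

/-- The (homogeneous) resultant `Res(F,G)` of the two binary forms of degree `d`,
as the determinant of their Sylvester matrix. -/
def resultant {K : Type} [CommRing K] (d : ℕ) (a b : Fin (d+1) → K) : K :=
  (sylvester d a b).det

/-- The map `φ = [F:G]` has good reduction at the place `v`: after multiplying `F`
and `G` by a suitable nonzero scalar `u` (so as to be in `v`-reduced form: all
coefficients in the valuation ring of `v` and at least one of them a `v`-unit), the
resultant `Res(uF, uG)` is a `v`-unit. -/
def GoodReduction {K : Type} [Field K] (v : K → WithTop ℤ) (d : ℕ)
    (a b : Fin (d+1) → K) : Prop :=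
  ∃ u : K, u ≠ 0 ∧ (∀ i, 0 ≤ v (u * a i) ∧ 0 ≤ v (u * b i)) ∧
    ((∃ i, v (u * a i) = 0) ∨ (∃ i, v (u * b i) = 0)) ∧
    v (resultant d (fun i => u * a i) (fun i => u * b i)) = 0

namespace WtHelp

lemma wt_cases (x : WithTop ℤ) : x = ⊤ ∨ ∃ a : ℤ, x = (a : WithTop ℤ) := by
  cases x with
  | top => exact Or.inl rfl
  | coe a => exact Or.inr ⟨a, rfl⟩

lemma sub_zero' (x : WithTop ℤ) : x - 0 = x := by
  rcases wt_cases x with rfl | ⟨a, rfl⟩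
  · simp
  · rw [show (0:WithTop ℤ) = ((0:ℤ):WithTop ℤ) from rfl,
      ← WithTop.LinearOrderedAddCommGroup.coe_sub]
    norm_num

lemma shift (t : ℤ) (X M N : WithTop ℤ) :
    ((t : WithTop ℤ) + X) - ((t : WithTop ℤ) + M) - N = X - M - N := by
  rcases wt_cases X with rfl | ⟨x, rfl⟩ <;>
  rcases wt_cases M with rfl | ⟨m, rfl⟩ <;>
  rcases wt_cases N with rfl | ⟨nn, rfl⟩ <;>
    simp [← WithTop.coe_add, ← WithTop.LinearOrderedAddCommGroup.coe_sub]

lemma sub_sub_comm (X M N : WithTop ℤ) : X - M - N = X - N - M := by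
  rcases wt_cases X with rfl | ⟨x, rfl⟩ <;>
  rcases wt_cases M with rfl | ⟨m, rfl⟩ <;>
  rcases wt_cases N with rfl | ⟨nn, rfl⟩ <;>
    simp [← WithTop.LinearOrderedAddCommGroup.coe_sub]
  ring_nf

lemma sub_le_sub' {X Y : WithTop ℤ} (M N : WithTop ℤ) (h : X ≤ Y) :
    X - M - N ≤ Y - M - N := by
  rcases wt_cases Y with rfl | ⟨y, rfl⟩
  · simp
  rcases wt_cases X with rfl | ⟨x, rfl⟩
  · simp at h
  rcases wt_cases M with rfl | ⟨m, rfl⟩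
  · simp
  rcases wt_cases N with rfl | ⟨nn, rfl⟩
  · simp
  rw [WithTop.coe_le_coe] at h
  simp only [← WithTop.LinearOrderedAddCommGroup.coe_sub, WithTop.coe_le_coe]
  omega

lemma eq_zero_of_self_add_self {x : WithTop ℤ} (hx : x ≠ ⊤) (h : x = x + x) : x = 0 := by
  rcases wt_cases x with rfl | ⟨a, rfl⟩
  · exact absurd rfl hx
  · rw [← WithTop.coe_add, WithTop.coe_eq_coe] at h
    rw [WithTop.coe_eq_zero]
    omega

lemma add_self_eq_zero {x : WithTop ℤ} (h : x + x = 0) : x = 0 := by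
  rcases wt_cases x with rfl | ⟨a, rfl⟩
  · simp at h
  · rw [show ((a:WithTop ℤ) + a) = ((a+a:ℤ):WithTop ℤ) from rfl, WithTop.coe_eq_zero] at h
    rw [WithTop.coe_eq_zero]
    omega

end WtHelp

section Val

variable {K : Type} [Field K] (v : K → WithTop ℤ)
variable (hv0 : v 0 = ⊤) (hvfin : ∀ x : K, x ≠ 0 → v x ≠ ⊤)
  (hvmul : ∀ x y : K, v (x * y) = v x + v y)
  (hvadd : ∀ x y : K, min (v x) (v y) ≤ v (x + y))

section
include hvfin hvmul

lemma v_one : v 1 = 0 := by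
  have h := hvmul 1 1
  rw [one_mul] at h
  exact WtHelp.eq_zero_of_self_add_self (hvfin 1 one_ne_zero) h

lemma v_neg_one : v (-1 : K) = 0 := by
  have h := hvmul (-1 : K) (-1)
  rw [neg_one_mul, neg_neg, v_one v hvfin hvmul] at h
  exact WtHelp.add_self_eq_zero h.symm

lemma v_neg (x : K) : v (-x) = v x := by
  rw [show -x = (-1) * x by ring, hvmul, v_neg_one v hvfin hvmul, zero_add]

lemma v_pow_nonneg {x : K} (h : 0 ≤ v x) (m : ℕ) : 0 ≤ v (x ^ m) := by
  induction m with
  | zero => rw [pow_zero, v_one v hvfin hvmul]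
  | succ k ih => rw [pow_succ, hvmul]; exact add_nonneg ih h

lemma v_pow_zero {x : K} (h : v x = 0) (m : ℕ) : v (x ^ m) = 0 := by
  induction m with
  | zero => rw [pow_zero]; exact v_one v hvfin hvmul
  | succ k ih => rw [pow_succ, hvmul, ih, h, add_zero]

end

section
include hvfin hvmul hvadd

lemma v_sub (x y : K) : min (v x) (v y) ≤ v (x - y) := by
  rw [sub_eq_add_neg]
  have := hvadd x (-y)
  rwa [v_neg v hvfin hvmul] at this

end

section
include hv0 hvadd

lemma v_sum_ge {ι : Type*} (s : Finset ι) (f : ι → K) (c : WithTop ℤ)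
    (h : ∀ i ∈ s, c ≤ v (f i)) : c ≤ v (∑ i ∈ s, f i) := by
  induction s using Finset.cons_induction with
  | empty => rw [Finset.sum_empty, hv0]; exact le_top
  | cons a s ha ih =>
      rw [Finset.sum_cons]
      refine le_trans (le_min (h a (Finset.mem_cons_self a s)) ?_) (hvadd _ _)
      exact ih fun i hi => h i (Finset.mem_cons_of_mem hi)

end

section
include hvfin hvmul

lemma v_prod_nonneg {ι : Type*} (s : Finset ι) (f : ι → K)
    (h : ∀ i ∈ s, 0 ≤ v (f i)) : 0 ≤ v (∏ i ∈ s, f i) := by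
  induction s using Finset.cons_induction with
  | empty => rw [Finset.prod_empty]; exact le_of_eq (v_one v hvfin hvmul).symm
  | cons a s ha ih =>
      rw [Finset.prod_cons, hvmul]
      exact add_nonneg (h a (Finset.mem_cons_self a s))
        (ih fun i hi => h i (Finset.mem_cons_of_mem hi))

end

section
include hv0 hvfin hvmul hvadd

lemma v_det_nonneg {m : ℕ} (M : Matrix (Fin m) (Fin m) K)
    (h : ∀ i j, 0 ≤ v (M i j)) : 0 ≤ v M.det := by
  rw [Matrix.det_apply]
  refine v_sum_ge v hv0 hvadd _ _ _ fun σ _ => ?_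
  have hp : 0 ≤ v (∏ i, M (σ i) i) :=
    v_prod_nonneg v hvfin hvmul _ _ fun i _ => h (σ i) i
  rcases Int.units_eq_one_or (Equiv.Perm.sign σ) with h1 | h1 <;> rw [h1]
  · rwa [one_smul]
  · rw [Units.smul_def]
    norm_num
    rwa [v_neg v hvfin hvmul]

end

end Val

section LogDist

variable {K : Type} [Field K] (v : K → WithTop ℤ)
variable (hv0 : v 0 = ⊤) (hvfin : ∀ x : K, x ≠ 0 → v x ≠ ⊤)
  (hvmul : ∀ x y : K, v (x * y) = v x + v y)
  (hvadd : ∀ x y : K, min (v x) (v y) ≤ v (x + y))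
  (hvdisc : ∀ n : ℤ, ∃ x : K, v x = (n : WithTop ℤ))

include hv0 in
lemma logDist_self (A : K × K) : logDist v A A = ⊤ := by
  unfold logDist
  rw [sub_self, hv0]
  simp

include hvfin hvmul

lemma logDist_comm (A B : K × K) : logDist v A B = logDist v B A := by
  unfold logDist
  rw [show B.1 * A.2 - A.1 * B.2 = -(A.1 * B.2 - B.1 * A.2) by ring,
    v_neg v hvfin hvmul, WtHelp.sub_sub_comm]

lemma logDist_smul_left {c : K} (hc : c ≠ 0) (A B : K × K) :
    logDist v (c • A) B = logDist v A B := by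
  obtain ⟨t, ht⟩ := WithTop.ne_top_iff_exists.mp (hvfin c hc)
  unfold logDist
  have h1 : (c • A).1 = c * A.1 := rfl
  have h2 : (c • A).2 = c * A.2 := rfl
  rw [h1, h2, show c * A.1 * B.2 - B.1 * (c * A.2) = c * (A.1 * B.2 - B.1 * A.2) by ring,
    hvmul, hvmul, hvmul, min_add_add_left, ← ht, WtHelp.shift]

lemma logDist_smul_right {c : K} (hc : c ≠ 0) (A B : K × K) :
    logDist v A (c • B) = logDist v A B := by
  rw [logDist_comm v hvfin hvmul, logDist_smul_left v hvfin hvmul hc,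
    logDist_comm v hvfin hvmul]

end LogDist

section Ultra

variable {K : Type} [Field K] (v : K → WithTop ℤ)
variable (hv0 : v 0 = ⊤) (hvfin : ∀ x : K, x ≠ 0 → v x ≠ ⊤)
  (hvmul : ∀ x y : K, v (x * y) = v x + v y)
  (hvadd : ∀ x y : K, min (v x) (v y) ≤ v (x + y))
  (hvdisc : ∀ n : ℤ, ∃ x : K, v x = (n : WithTop ℤ))

include hv0 hvfin hvmul hvdisc in
lemma exists_normalizer (A : K × K) (hA : A ≠ (0, 0)) :
    ∃ c : K, c ≠ 0 ∧ min (v ((c • A).1)) (v ((c • A).2)) = 0 := by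
  have hne : A.1 ≠ 0 ∨ A.2 ≠ 0 := by
    by_contra h
    push_neg at h
    exact hA (Prod.ext h.1 h.2)
  have hmin : min (v A.1) (v A.2) ≠ ⊤ := by
    rcases hne with h | h
    · exact fun ht => hvfin A.1 h (eq_top_mono (min_le_left _ _) ht)
    · exact fun ht => hvfin A.2 h (eq_top_mono (min_le_right _ _) ht)
  obtain ⟨z, hz⟩ := WithTop.ne_top_iff_exists.mp hmin
  obtain ⟨c, hc⟩ := hvdisc (-z)
  have hcne : c ≠ 0 := by
    intro h
    rw [h, hv0] at hc
    exact (WithTop.top_ne_coe) hc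
  refine ⟨c, hcne, ?_⟩
  have h1 : ((c • A).1 : K) = c * A.1 := rfl
  have h2 : ((c • A).2 : K) = c * A.2 := rfl
  rw [h1, h2, hvmul, hvmul, min_add_add_left, ← hz, hc]
  rw [← WithTop.coe_add]
  norm_num

include hvmul hvadd in
lemma cross_trans (x y z : K × K) (hy : min (v y.1) (v y.2) = 0)
    (hx1 : 0 ≤ v x.1) (hx2 : 0 ≤ v x.2) (hz1 : 0 ≤ v z.1) (hz2 : 0 ≤ v z.2) :
    min (v (x.1 * y.2 - y.1 * x.2)) (v (y.1 * z.2 - z.1 * y.2)) ≤ v (x.1 * z.2 - z.1 * x.2) := by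
  have hy' : v y.1 = 0 ∨ v y.2 = 0 := by
    rcases min_eq_iff.mp hy with ⟨h, -⟩ | ⟨h, -⟩
    · exact Or.inl h
    · exact Or.inr h
  set cAB := x.1 * y.2 - y.1 * x.2 with hcAB
  set cBC := y.1 * z.2 - z.1 * y.2 with hcBC
  rcases hy' with h0 | h0
  · have hid : y.1 * (x.1 * z.2 - z.1 * x.2) = z.1 * cAB + x.1 * cBC := by
      rw [hcAB, hcBC]; ring
    have hv1 : v (y.1 * (x.1 * z.2 - z.1 * x.2)) = v (x.1 * z.2 - z.1 * x.2) := by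
      rw [hvmul, h0, zero_add]
    calc min (v cAB) (v cBC)
        ≤ min (v (z.1 * cAB)) (v (x.1 * cBC)) := by
          apply le_min
          · exact le_trans (min_le_left _ _) (by rw [hvmul]; exact le_add_of_nonneg_left hz1)
          · exact le_trans (min_le_right _ _) (by rw [hvmul]; exact le_add_of_nonneg_left hx1)
      _ ≤ v (z.1 * cAB + x.1 * cBC) := hvadd _ _
      _ = v (x.1 * z.2 - z.1 * x.2) := by rw [← hid, hv1]
  · have hid : y.2 * (x.1 * z.2 - z.1 * x.2) = z.2 * cAB + x.2 * cBC := by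
      rw [hcAB, hcBC]; ring
    have hv1 : v (y.2 * (x.1 * z.2 - z.1 * x.2)) = v (x.1 * z.2 - z.1 * x.2) := by
      rw [hvmul, h0, zero_add]
    calc min (v cAB) (v cBC)
        ≤ min (v (z.2 * cAB)) (v (x.2 * cBC)) := by
          apply le_min
          · exact le_trans (min_le_left _ _) (by rw [hvmul]; exact le_add_of_nonneg_left hz2)
          · exact le_trans (min_le_right _ _) (by rw [hvmul]; exact le_add_of_nonneg_left hx2)
      _ ≤ v (z.2 * cAB + x.2 * cBC) := hvadd _ _
      _ = v (x.1 * z.2 - z.1 * x.2) := by rw [← hid, hv1]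

lemma logDist_of_normalized (A B : K × K) (hA : min (v A.1) (v A.2) = 0)
    (hB : min (v B.1) (v B.2) = 0) :
    logDist v A B = v (A.1 * B.2 - B.1 * A.2) := by
  unfold logDist
  rw [hA, hB, WtHelp.sub_zero', WtHelp.sub_zero']

include hv0 hvfin hvmul hvadd hvdisc in
lemma logDist_ultra (A B C : K × K) (hA : A ≠ (0, 0)) (hB : B ≠ (0, 0)) (hC : C ≠ (0, 0)) :
    min (logDist v A B) (logDist v B C) ≤ logDist v A C := by
  obtain ⟨α, hα, hAn⟩ := exists_normalizer v hv0 hvfin hvmul hvdisc A hA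
  obtain ⟨β, hβ, hBn⟩ := exists_normalizer v hv0 hvfin hvmul hvdisc B hB
  obtain ⟨γ, hγ, hCn⟩ := exists_normalizer v hv0 hvfin hvmul hvdisc C hC
  rw [show logDist v A B = logDist v (α • A) (β • B) by
        rw [logDist_smul_left v hvfin hvmul hα, logDist_smul_right v hvfin hvmul hβ],
      show logDist v B C = logDist v (β • B) (γ • C) by
        rw [logDist_smul_left v hvfin hvmul hβ, logDist_smul_right v hvfin hvmul hγ],
      show logDist v A C = logDist v (α • A) (γ • C) by
        rw [logDist_smul_left v hvfin hvmul hα, logDist_smul_right v hvfin hvmul hγ],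
      logDist_of_normalized v _ _ hAn hBn, logDist_of_normalized v _ _ hBn hCn,
      logDist_of_normalized v _ _ hAn hCn]
  exact cross_trans v hvmul hvadd _ _ _ hBn
    (hAn ▸ min_le_left _ _) (hAn ▸ min_le_right _ _)
    (hCn ▸ min_le_left _ _) (hCn ▸ min_le_right _ _)

end Ultra
section Sylv

variable {K : Type} [Field K]

/-- total extension of a coefficient vector -/
def Ctot {K : Type} [Field K] (d : ℕ) (c : Fin (d+1) → K) : ℕ → K :=
  fun m => if h : m < d + 1 then c ⟨m, h⟩ else 0

lemma Ctot_coe {d : ℕ} (c : Fin (d+1) → K) (k : Fin (d+1)) : Ctot d c (k : ℕ) = c k := by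
  unfold Ctot
  rw [dif_pos k.2, Fin.eta]

lemma row_sum (d : ℕ) (hd : 1 ≤ d) (c : Fin (d+1) → K) (e : ℕ) (he : e ≤ d - 1) (P : K × K) :
    (∑ m ∈ Finset.range (d+d),
      if e ≤ m ∧ m ≤ e + d then Ctot d c (m - e) * (P.1 ^ m * P.2 ^ (d+d-1-m)) else 0)
    = P.1 ^ e * P.2 ^ (d-1-e) * ∑ k : Fin (d+1), c k * P.1 ^ (k:ℕ) * P.2 ^ (d - (k:ℕ)) := by
  have h1 : ∀ m : ℕ, (e ≤ m ∧ m ≤ e + d) ↔ m ∈ Finset.Icc e (e + d) := by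
    intro m; rw [Finset.mem_Icc]
  rw [Finset.sum_congr rfl (fun m _ => by rw [if_congr (h1 m) rfl rfl])]
  rw [Finset.sum_ite_mem]
  have h2 : Finset.range (d+d) ∩ Finset.Icc e (e+d) = Finset.Icc e (e+d) := by
    rw [Finset.inter_eq_right]
    intro m hm
    rw [Finset.mem_Icc] at hm
    rw [Finset.mem_range]
    omega
  rw [h2, ← Finset.Ico_add_one_right_eq_Icc, Finset.sum_Ico_eq_sum_range]
  have h3 : e + d + 1 - e = d + 1 := by omega
  rw [h3]
  have h4 : ∑ k : Fin (d+1), c k * P.1 ^ (k:ℕ) * P.2 ^ (d - (k:ℕ))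
      = ∑ k ∈ Finset.range (d+1), Ctot d c k * P.1 ^ k * P.2 ^ (d - k) := by
    rw [← Fin.sum_univ_eq_sum_range (fun k => Ctot d c k * P.1 ^ k * P.2 ^ (d - k)) (d+1)]
    exact Finset.sum_congr rfl fun k _ => by rw [Ctot_coe]
  rw [h4, Finset.mul_sum]
  refine Finset.sum_congr rfl fun k hk => ?_
  rw [Finset.mem_range] at hk
  have h5 : e + k - e = k := by omega
  have h6 : d + d - 1 - (e + k) = (d - 1 - e) + (d - k) := by omega
  rw [h5, h6, pow_add, pow_add]
  ring

lemma sylvester_mulVec (d : ℕ) (hd : 1 ≤ d) (a b : Fin (d+1) → K) (P : K × K) (i : Fin (d+d)) :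
    (sylvester d a b).mulVec (fun j : Fin (d+d) => P.1 ^ (j:ℕ) * P.2 ^ (d+d-1-(j:ℕ))) i
    = if (i:ℕ) < d then P.1 ^ (i:ℕ) * P.2 ^ (d-1-(i:ℕ)) * (evalPair d a b P).1
      else P.1 ^ ((i:ℕ)-d) * P.2 ^ (d-1-((i:ℕ)-d)) * (evalPair d a b P).2 := by
  rw [Matrix.mulVec, dotProduct]
  by_cases hi : (i:ℕ) < d
  · rw [if_pos hi]
    have hrow : ∀ j : Fin (d+d), sylvester d a b i j * (P.1 ^ (j:ℕ) * P.2 ^ (d+d-1-(j:ℕ)))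
        = (fun m : ℕ => if (i:ℕ) ≤ m ∧ m ≤ (i:ℕ) + d
            then Ctot d a (m - (i:ℕ)) * (P.1 ^ m * P.2 ^ (d+d-1-m)) else 0) (j:ℕ) := by
      intro j
      simp only [sylvester, dif_pos hi]
      by_cases hj : (i:ℕ) ≤ (j:ℕ) ∧ (j:ℕ) ≤ (i:ℕ) + d
      · rw [dif_pos hj, if_pos hj]
        have : Ctot d a ((j:ℕ) - (i:ℕ)) = a ⟨(j:ℕ) - (i:ℕ), by omega⟩ := by
          unfold Ctot
          rw [dif_pos (by omega : (j:ℕ) - (i:ℕ) < d + 1)]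
      
        rw [this]
      · rw [dif_neg hj, if_neg hj, zero_mul]
    rw [Finset.sum_congr rfl fun j _ => hrow j,
      Fin.sum_univ_eq_sum_range (fun m : ℕ => if (i:ℕ) ≤ m ∧ m ≤ (i:ℕ) + d
        then Ctot d a (m - (i:ℕ)) * (P.1 ^ m * P.2 ^ (d+d-1-m)) else 0) (d+d),
      row_sum d hd a (i:ℕ) (by omega) P]
    rfl
  · rw [if_neg hi]
    have hrow : ∀ j : Fin (d+d), sylvester d a b i j * (P.1 ^ (j:ℕ) * P.2 ^ (d+d-1-(j:ℕ)))
        = (fun m : ℕ => if (i:ℕ) - d ≤ m ∧ m ≤ ((i:ℕ) - d) + d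
            then Ctot d b (m - ((i:ℕ) - d)) * (P.1 ^ m * P.2 ^ (d+d-1-m)) else 0) (j:ℕ) := by
      intro j
      simp only [sylvester, dif_neg hi]
      have hieq : (i:ℕ) - d + d = (i:ℕ) := by
        have := i.2
        omega
      by_cases hj : (i:ℕ) - d ≤ (j:ℕ) ∧ (j:ℕ) ≤ (i:ℕ)
      · rw [dif_pos hj, if_pos (by omega)]
        have : Ctot d b ((j:ℕ) - ((i:ℕ) - d)) = b ⟨(j:ℕ) - ((i:ℕ) - d), by omega⟩ := by
          unfold Ctot
          rw [dif_pos (by omega : (j:ℕ) - ((i:ℕ) - d) < d + 1)]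
        rw [this]
      · rw [dif_neg hj, if_neg (by omega), zero_mul]
    rw [Finset.sum_congr rfl fun j _ => hrow j,
      Fin.sum_univ_eq_sum_range (fun m : ℕ => if (i:ℕ) - d ≤ m ∧ m ≤ ((i:ℕ) - d) + d
        then Ctot d b (m - ((i:ℕ) - d)) * (P.1 ^ m * P.2 ^ (d+d-1-m)) else 0) (d+d),
      row_sum d hd b ((i:ℕ) - d) (by have := i.2; omega) P]
    rfl

end Sylv
section GoodRed

variable {K : Type} [Field K] (v : K → WithTop ℤ)
variable (hv0 : v 0 = ⊤) (hvfin : ∀ x : K, x ≠ 0 → v x ≠ ⊤)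
  (hvmul : ∀ x y : K, v (x * y) = v x + v y)
  (hvadd : ∀ x y : K, min (v x) (v y) ≤ v (x + y))

variable {d : ℕ} {a b : Fin (d+1) → K}

include hv0 in
lemma sylvester_entry_nonneg (hint : ∀ i, 0 ≤ v (a i) ∧ 0 ≤ v (b i))
    (i j : Fin (d+d)) : 0 ≤ v (sylvester d a b i j) := by
  unfold sylvester
  split_ifs with h1 h2 h3
  · exact (hint _).1
  · rw [hv0]; exact le_top
  · exact (hint _).2
  · rw [hv0]; exact le_top

include hv0 hvfin hvmul hvadd in
lemma adjugate_entry_nonneg (hint : ∀ i, 0 ≤ v (a i) ∧ 0 ≤ v (b i))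
    (i j : Fin (d+d)) : 0 ≤ v ((sylvester d a b).adjugate i j) := by
  rw [Matrix.adjugate_apply]
  apply v_det_nonneg v hv0 hvfin hvmul hvadd
  intro i' j'
  rw [Matrix.updateRow_apply]
  by_cases h : i' = j
  · rw [if_pos h, Pi.single_apply]
    by_cases h2 : j' = i
    · rw [if_pos h2]
      rw [show v 1 = 0 from v_one v hvfin hvmul]
    · rw [if_neg h2, hv0]; exact le_top
  · rw [if_neg h]
    exact sylvester_entry_nonneg v hv0 hint i' j'

lemma resultant_identity (hd : 1 ≤ d) (P : K × K) (r : Fin (d+d)) :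
    resultant d a b * (P.1 ^ (r:ℕ) * P.2 ^ (d+d-1-(r:ℕ)))
    = ∑ i : Fin (d+d), (sylvester d a b).adjugate r i *
        (if (i:ℕ) < d then P.1 ^ (i:ℕ) * P.2 ^ (d-1-(i:ℕ)) * (evalPair d a b P).1
         else P.1 ^ ((i:ℕ)-d) * P.2 ^ (d-1-((i:ℕ)-d)) * (evalPair d a b P).2) := by
  set M := sylvester d a b with hM
  set w : Fin (d+d) → K := fun j => P.1 ^ (j:ℕ) * P.2 ^ (d+d-1-(j:ℕ)) with hw
  have key : M.adjugate.mulVec (M.mulVec w) = M.det • w := by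
    rw [Matrix.mulVec_mulVec, Matrix.adjugate_mul, Matrix.smul_mulVec,
      Matrix.one_mulVec]
  have h1 := congrFun key r
  rw [Pi.smul_apply, smul_eq_mul] at h1
  rw [show resultant d a b = M.det from rfl, ← h1, Matrix.mulVec, dotProduct]
  refine Finset.sum_congr rfl fun i _ => ?_
  rw [show M.mulVec w i = _ from sylvester_mulVec d hd a b P i]

include hv0 hvfin hvmul hvadd in
lemma eval_nonneg (hint : ∀ i, 0 ≤ v (a i) ∧ 0 ≤ v (b i)) (P : K × K)
    (h1 : 0 ≤ v P.1) (h2 : 0 ≤ v P.2) :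
    0 ≤ v (evalPair d a b P).1 ∧ 0 ≤ v (evalPair d a b P).2 := by
  simp only [evalPair]
  constructor <;>
  · apply v_sum_ge v hv0 hvadd
    intro k _
    rw [hvmul, hvmul]
    exact add_nonneg (add_nonneg (by first | exact (hint k).1 | exact (hint k).2)
      (v_pow_nonneg v hvfin hvmul h1 _)) (v_pow_nonneg v hvfin hvmul h2 _)

include hv0 hvfin hvmul hvadd in
lemma min_v_eval_eq_zero (hd : 1 ≤ d) (hint : ∀ i, 0 ≤ v (a i) ∧ 0 ≤ v (b i))
    (hres : v (resultant d a b) = 0) (P : K × K)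
    (hmin : min (v P.1) (v P.2) = 0) :
    min (v (evalPair d a b P).1) (v (evalPair d a b P).2) = 0 := by
  have h1 : 0 ≤ v P.1 := hmin ▸ min_le_left _ _
  have h2 : 0 ≤ v P.2 := hmin ▸ min_le_right _ _
  have hev := eval_nonneg v hv0 hvfin hvmul hvadd hint P h1 h2
  refine le_antisymm ?_ (le_min hev.1 hev.2)
  have hP0 : v P.1 = 0 ∨ v P.2 = 0 := by
    rcases min_eq_iff.mp hmin with ⟨h, -⟩ | ⟨h, -⟩
    · exact Or.inl h
    · exact Or.inr h
  -- choose the row index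
  obtain ⟨r, hr⟩ : ∃ r : Fin (d+d), v (P.1 ^ (r:ℕ) * P.2 ^ (d+d-1-(r:ℕ))) = 0 := by
    rcases hP0 with h0 | h0
    · refine ⟨⟨d+d-1, by omega⟩, ?_⟩
      simp only []
      rw [show d+d-1-(d+d-1) = 0 by omega, pow_zero, mul_one]
      exact v_pow_zero v hvfin hvmul h0 _
    · refine ⟨⟨0, by omega⟩, ?_⟩
      simp only []
      rw [pow_zero, one_mul, show d+d-1-0 = d+d-1 by omega]
      exact v_pow_zero v hvfin hvmul h0 _
  have hid := resultant_identity (a := a) (b := b) hd P r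
  have hL : v (resultant d a b * (P.1 ^ (r:ℕ) * P.2 ^ (d+d-1-(r:ℕ)))) = 0 := by
    rw [hvmul, hres, hr, add_zero]
  rw [hid] at hL
  rw [← hL]
  apply v_sum_ge v hv0 hvadd
  intro i _
  rw [hvmul]
  refine le_trans ?_ (le_add_of_nonneg_left
    (adjugate_entry_nonneg v hv0 hvfin hvmul hvadd hint r i))
  by_cases hi : (i:ℕ) < d
  · rw [if_pos hi, hvmul]
    refine le_trans (min_le_left _ _) (le_add_of_nonneg_left ?_)
    rw [hvmul]
    exact add_nonneg (v_pow_nonneg v hvfin hvmul h1 _) (v_pow_nonneg v hvfin hvmul h2 _)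
  · rw [if_neg hi, hvmul]
    refine le_trans (min_le_right _ _) (le_add_of_nonneg_left ?_)
    rw [hvmul]
    exact add_nonneg (v_pow_nonneg v hvfin hvmul h1 _) (v_pow_nonneg v hvfin hvmul h2 _)

end GoodRed
section Cross

variable {K : Type} [Field K] (v : K → WithTop ℤ)
variable (hv0 : v 0 = ⊤) (hvfin : ∀ x : K, x ≠ 0 → v x ≠ ⊤)
  (hvmul : ∀ x y : K, v (x * y) = v x + v y)
  (hvadd : ∀ x y : K, min (v x) (v y) ≤ v (x + y))

lemma T_id (x1 x2 y1 y2 : K) (k s m : ℕ) :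
    x1^k * x2^(s+m) * (y1^(k+m) * y2^s) - y1^k * y2^(s+m) * (x1^(k+m) * x2^s)
    = (x1*y2 - y1*x2) *
      -((x1^k*y1^k*x2^s*y2^s) * ∑ t ∈ Finset.range m, (x2*y1)^t * (x1*y2)^(m-1-t)) := by
  have key := geom_sum₂_mul (x2*y1) (x1*y2) m
  linear_combination (-(x1^k*y1^k*x2^s*y2^s)) * key

include hv0 hvfin hvmul hvadd in
lemma T_factor {d : ℕ} (P Q : K × K)
    (hp1 : 0 ≤ v P.1) (hp2 : 0 ≤ v P.2) (hq1 : 0 ≤ v Q.1) (hq2 : 0 ≤ v Q.2)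
    (k l : ℕ) (hk : k ≤ d) (hl : l ≤ d) :
    ∃ h : K, P.1^k * P.2^(d-k) * (Q.1^l * Q.2^(d-l)) - Q.1^k * Q.2^(d-k) * (P.1^l * P.2^(d-l))
      = (P.1 * Q.2 - Q.1 * P.2) * h ∧ 0 ≤ v h := by
  have main : ∀ k l : ℕ, k ≤ d → l ≤ d → k ≤ l →
      ∃ h : K, P.1^k * P.2^(d-k) * (Q.1^l * Q.2^(d-l)) - Q.1^k * Q.2^(d-k) * (P.1^l * P.2^(d-l))
        = (P.1 * Q.2 - Q.1 * P.2) * h ∧ 0 ≤ v h := by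
    clear hk hl k l
    intro k l hk hl hkl
    obtain ⟨m, rfl⟩ : ∃ m, l = k + m := ⟨l - k, by omega⟩
    have h1 : d - k = (d - (k + m)) + m := by omega
    have h2 : (k + m) = k + m := rfl
    set s := d - (k + m) with hs
    rw [h1]
    refine ⟨-((P.1^k*Q.1^k*P.2^s*Q.2^s) * ∑ t ∈ Finset.range m, (P.2*Q.1)^t * (P.1*Q.2)^(m-1-t)),
      T_id P.1 P.2 Q.1 Q.2 k s m, ?_⟩
    rw [v_neg v hvfin hvmul, hvmul]
    refine add_nonneg ?_ ?_
    · rw [hvmul, hvmul, hvmul]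
      exact add_nonneg (add_nonneg (add_nonneg (v_pow_nonneg v hvfin hvmul hp1 _)
        (v_pow_nonneg v hvfin hvmul hq1 _)) (v_pow_nonneg v hvfin hvmul hp2 _))
        (v_pow_nonneg v hvfin hvmul hq2 _)
    · refine v_sum_ge v hv0 hvadd _ _ _ fun t _ => ?_
      rw [hvmul]
      refine add_nonneg (v_pow_nonneg v hvfin hvmul (by rw [hvmul]; exact add_nonneg hp2 hq1) _)
        (v_pow_nonneg v hvfin hvmul (by rw [hvmul]; exact add_nonneg hp1 hq2) _)
  rcases le_total k l with hkl | hkl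
  · exact main k l hk hl hkl
  · obtain ⟨h, hid, hnn⟩ := main l k hl hk hkl
    refine ⟨-h, ?_, by rwa [v_neg v hvfin hvmul]⟩
    have : P.1^k * P.2^(d-k) * (Q.1^l * Q.2^(d-l)) - Q.1^k * Q.2^(d-k) * (P.1^l * P.2^(d-l))
        = -(P.1^l * P.2^(d-l) * (Q.1^k * Q.2^(d-k)) - Q.1^l * Q.2^(d-l) * (P.1^k * P.2^(d-k))) := by
      ring
    rw [this, hid]
    ring

include hv0 hvfin hvmul hvadd in
lemma eval_cross_ge {d : ℕ} (a b : Fin (d+1) → K)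
    (hint : ∀ i, 0 ≤ v (a i) ∧ 0 ≤ v (b i)) (P Q : K × K)
    (hp1 : 0 ≤ v P.1) (hp2 : 0 ≤ v P.2) (hq1 : 0 ≤ v Q.1) (hq2 : 0 ≤ v Q.2) :
    v (P.1 * Q.2 - Q.1 * P.2)
      ≤ v ((evalPair d a b P).1 * (evalPair d a b Q).2
          - (evalPair d a b Q).1 * (evalPair d a b P).2) := by
  choose h hid hnn using fun (k l : Fin (d+1)) =>
    T_factor v hv0 hvfin hvmul hvadd P Q hp1 hp2 hq1 hq2 (k:ℕ) (l:ℕ) k.is_le l.is_le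
  have expand : (evalPair d a b P).1 * (evalPair d a b Q).2
      - (evalPair d a b Q).1 * (evalPair d a b P).2
      = ∑ k : Fin (d+1), ∑ l : Fin (d+1), a k * b l *
          (P.1^(k:ℕ) * P.2^(d-(k:ℕ)) * (Q.1^(l:ℕ) * Q.2^(d-(l:ℕ)))
           - Q.1^(k:ℕ) * Q.2^(d-(k:ℕ)) * (P.1^(l:ℕ) * P.2^(d-(l:ℕ)))) := by
    simp only [evalPair]
    rw [Finset.sum_mul_sum, Finset.sum_mul_sum, ← Finset.sum_sub_distrib]
    refine Finset.sum_congr rfl fun k _ => ?_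
    rw [← Finset.sum_sub_distrib]
    refine Finset.sum_congr rfl fun l _ => ?_
    ring
  have expand2 : (evalPair d a b P).1 * (evalPair d a b Q).2
      - (evalPair d a b Q).1 * (evalPair d a b P).2
      = (P.1 * Q.2 - Q.1 * P.2) *
        ∑ k : Fin (d+1), ∑ l : Fin (d+1), a k * b l * h k l := by
    rw [expand]
    rw [Finset.mul_sum]
    refine Finset.sum_congr rfl fun k _ => ?_
    rw [Finset.mul_sum]
    refine Finset.sum_congr rfl fun l _ => ?_
    rw [hid k l]
    ring
  rw [expand2, hvmul]
  refine le_add_of_nonneg_right ?_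
  refine v_sum_ge v hv0 hvadd _ _ _ fun k _ => ?_
  refine v_sum_ge v hv0 hvadd _ _ _ fun l _ => ?_
  rw [hvmul, hvmul]
  exact add_nonneg (add_nonneg (hint k).1 (hint l).2) (hnn k l)

end Cross
section Mono

variable {K : Type} [Field K] (v : K → WithTop ℤ)
variable (hv0 : v 0 = ⊤) (hvfin : ∀ x : K, x ≠ 0 → v x ≠ ⊤)
  (hvmul : ∀ x y : K, v (x * y) = v x + v y)
  (hvadd : ∀ x y : K, min (v x) (v y) ≤ v (x + y))
  (hvdisc : ∀ n : ℤ, ∃ x : K, v x = (n : WithTop ℤ))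

lemma evalPair_smul {d : ℕ} (a b : Fin (d+1) → K) (c : K) (P : K × K) :
    evalPair d a b (c • P) = c ^ d • evalPair d a b P := by
  have h1 : (c • P).1 = c * P.1 := rfl
  have h2 : (c • P).2 = c * P.2 := rfl
  unfold evalPair
  rw [h1, h2]
  have key : ∀ (f : Fin (d+1) → K),
      ∑ i : Fin (d+1), f i * (c * P.1)^(i:ℕ) * (c * P.2)^(d-(i:ℕ))
      = c ^ d * ∑ i : Fin (d+1), f i * P.1^(i:ℕ) * P.2^(d-(i:ℕ)) := by
    intro f
    rw [Finset.mul_sum]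
    refine Finset.sum_congr rfl fun i _ => ?_
    have hi : (i:ℕ) + (d - (i:ℕ)) = d := by have := i.is_le; omega
    rw [mul_pow, mul_pow, show c ^ d = c ^ ((i:ℕ) + (d - (i:ℕ))) by rw [hi], pow_add]
    ring
  rw [key a, key b]
  rfl

include hv0 hvfin hvmul hvadd hvdisc in
lemma evalPair_ne_zero {d : ℕ} (hd : 1 ≤ d) {a b : Fin (d+1) → K}
    (hint : ∀ i, 0 ≤ v (a i) ∧ 0 ≤ v (b i)) (hres : v (resultant d a b) = 0)
    (Q : K × K) (hQ : Q ≠ (0, 0)) : evalPair d a b Q ≠ (0, 0) := by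
  obtain ⟨c, hc, hcn⟩ := exists_normalizer v hv0 hvfin hvmul hvdisc Q hQ
  have hmin := min_v_eval_eq_zero v hv0 hvfin hvmul hvadd hd hint hres (c • Q) hcn
  intro h0
  rw [evalPair_smul, h0] at hmin
  have : (c ^ d • ((0:K), (0:K))) = ((0:K), (0:K)) := by
    refine Prod.ext ?_ ?_ <;> simp
  rw [this] at hmin
  simp only [hv0] at hmin
  simp at hmin

include hv0 hvfin hvmul hvadd hvdisc in
lemma logDist_mono {d : ℕ} (hd : 1 ≤ d) {a b : Fin (d+1) → K}
    (hint : ∀ i, 0 ≤ v (a i) ∧ 0 ≤ v (b i)) (hres : v (resultant d a b) = 0)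
    (P Q : K × K) (hP : P ≠ (0, 0)) (hQ : Q ≠ (0, 0)) :
    logDist v P Q ≤ logDist v (evalPair d a b P) (evalPair d a b Q) := by
  obtain ⟨α, hα, hαn⟩ := exists_normalizer v hv0 hvfin hvmul hvdisc P hP
  obtain ⟨β, hβ, hβn⟩ := exists_normalizer v hv0 hvfin hvmul hvdisc Q hQ
  have e1 : logDist v P Q = logDist v (α • P) (β • Q) := by
    rw [logDist_smul_left v hvfin hvmul hα, logDist_smul_right v hvfin hvmul hβ]
  have e2 : logDist v (evalPair d a b P) (evalPair d a b Q)
      = logDist v (evalPair d a b (α • P)) (evalPair d a b (β • Q)) := by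
    rw [evalPair_smul, evalPair_smul,
      logDist_smul_left v hvfin hvmul (pow_ne_zero _ hα),
      logDist_smul_right v hvfin hvmul (pow_ne_zero _ hβ)]
  rw [e1, e2, logDist_of_normalized v _ _ hαn hβn,
    logDist_of_normalized v _ _
      (min_v_eval_eq_zero v hv0 hvfin hvmul hvadd hd hint hres _ hαn)
      (min_v_eval_eq_zero v hv0 hvfin hvmul hvadd hd hint hres _ hβn)]
  exact eval_cross_ge v hv0 hvfin hvmul hvadd a b hint _ _
    (hαn ▸ min_le_left _ _) (hαn ▸ min_le_right _ _)
    (hβn ▸ min_le_left _ _) (hβn ▸ min_le_right _ _)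

end Mono

theorem main_normalized {K : Type} [Field K] (v : K → WithTop ℤ)
    (hv0 : v 0 = ⊤) (hvfin : ∀ x : K, x ≠ 0 → v x ≠ ⊤)
    (hvmul : ∀ x y : K, v (x * y) = v x + v y)
    (hvadd : ∀ x y : K, min (v x) (v y) ≤ v (x + y))
    (hvdisc : ∀ n : ℤ, ∃ x : K, v x = (n : WithTop ℤ))
    (d : ℕ) (hd : 1 ≤ d) (a b : Fin (d+1) → K)
    (hint : ∀ i, 0 ≤ v (a i) ∧ 0 ≤ v (b i))
    (hres : v (resultant d a b) = 0)
    (P : K × K) (hP : P ≠ (0, 0)) (n : ℕ) (hn : 0 < n)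
    (c : K) (hc : c ≠ 0) (hcyc : (evalPair d a b)^[n] P = c • P)
    (i j : ℕ) (hij : Int.gcd ((i : ℤ) - (j : ℤ)) (n : ℤ) = 1) :
    logDist v ((evalPair d a b)^[i] P) ((evalPair d a b)^[j] P) =
      logDist v (evalPair d a b P) P := by
  set φ := evalPair d a b with hφ
  have hne : ∀ k, φ^[k] P ≠ (0, 0) := by
    intro k
    induction k with
    | zero => exact hP
    | succ k ih =>
        rw [Function.iterate_succ_apply']
        exact evalPair_ne_zero v hv0 hvfin hvmul hvadd hvdisc hd hint hres _ ih
  have hitsmul : ∀ (k : ℕ) (e : K) (Q : K × K), φ^[k] (e • Q) = e ^ (d ^ k) • φ^[k] Q := by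
    intro k
    induction k with
    | zero => intro e Q; simp
    | succ k ih =>
        intro e Q
        rw [Function.iterate_succ_apply, Function.iterate_succ_apply, hφ, evalPair_smul, ih,
          ← pow_mul, show d * d ^ k = d ^ (k+1) from by rw [pow_succ]; ring]
  have hshiftn : ∀ k l, logDist v (φ^[k+n] P) (φ^[l+n] P) = logDist v (φ^[k] P) (φ^[l] P) := by
    intro k l
    have hpowne : ∀ m : ℕ, c ^ (d ^ m) ≠ 0 := fun m => pow_ne_zero _ hc
    rw [Function.iterate_add_apply φ k n P, Function.iterate_add_apply φ l n P, hcyc,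
      hitsmul k c P, hitsmul l c P,
      logDist_smul_left v hvfin hvmul (hpowne k),
      logDist_smul_right v hvfin hvmul (hpowne l)]
  have hmono1 : ∀ k l, logDist v (φ^[k] P) (φ^[l] P) ≤ logDist v (φ^[k+1] P) (φ^[l+1] P) := by
    intro k l
    rw [Function.iterate_succ_apply', Function.iterate_succ_apply']
    exact logDist_mono v hv0 hvfin hvmul hvadd hvdisc hd hint hres _ _ (hne k) (hne l)
  have hmonot : ∀ (t k l : ℕ), logDist v (φ^[k] P) (φ^[l] P) ≤
      logDist v (φ^[k+t] P) (φ^[l+t] P) := by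
    intro t
    induction t with
    | zero => intro k l; exact le_rfl
    | succ t ih =>
        intro k l
        refine le_trans (ih k l) ?_
        rw [show k + (t+1) = (k+t) + 1 from by omega, show l + (t+1) = (l+t) + 1 from by omega]
        exact hmono1 (k+t) (l+t)
  have hstep : ∀ k l, logDist v (φ^[k+1] P) (φ^[l+1] P) = logDist v (φ^[k] P) (φ^[l] P) := by
    intro k l
    refine le_antisymm ?_ (hmono1 k l)
    have h1 := hmonot (n-1) (k+1) (l+1)
    rw [show k+1+(n-1) = k+n from by omega, show l+1+(n-1) = l+n from by omega, hshiftn] at h1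
    exact h1
  have hred : ∀ k m, logDist v (φ^[k+m] P) (φ^[m] P) = logDist v (φ^[k] P) P := by
    intro k m
    induction m with
    | zero => rfl
    | succ m ih =>
        rw [show k+(m+1) = (k+m)+1 from by omega, hstep (k+m) m]
        exact ih
  set D : ℕ → WithTop ℤ := fun m => logDist v (φ^[m] P) P with hD
  have hDper : ∀ m, D (m + n) = D m := by
    intro m
    have h1 := hred m n
    rw [hcyc, logDist_smul_right v hvfin hvmul hc] at h1
    exact h1
  have hDperq : ∀ m q, D (m + q * n) = D m := by
    intro m q
    induction q with
    | zero => norm_num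
    | succ q ih =>
        rw [show m + (q+1)*n = (m + q*n) + n from by ring, hDper, ih]
  have hDultra : ∀ s t, min (D s) (D t) ≤ D (s + t) := by
    intro s t
    have h1 : D s = logDist v (φ^[s+t] P) (φ^[t] P) := (hred s t).symm
    have h2 : min (logDist v (φ^[s+t] P) (φ^[t] P)) (logDist v (φ^[t] P) P)
        ≤ logDist v (φ^[s+t] P) P :=
      logDist_ultra v hv0 hvfin hvmul hvadd hvdisc _ _ _ (hne (s+t)) (hne t) hP
    rw [h1]
    exact h2
  have hDmul : ∀ (s m : ℕ), 1 ≤ m → D s ≤ D (m * s) := by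
    intro s m hm
    induction m with
    | zero => omega
    | succ m ih =>
        rcases Nat.eq_or_lt_of_le hm with h1 | h1
        · rw [← h1, one_mul]
        · have hm1 : 1 ≤ m := by omega
          refine le_trans (le_min (ih hm1) le_rfl) ?_
          rw [show (m+1)*s = m*s + s from by ring]
          exact hDultra (m*s) s
  -- the key claim
  have claim : ∀ k : ℕ, Nat.gcd k n = 1 → D k = D 1 := by
    intro k hk
    by_cases hn1 : n = 1
    · have hall : ∀ m, D m = D 0 := by
        intro m
        induction m with
        | zero => rfl
        | succ m ih =>
            have h2 := hDper m
            rw [hn1] at h2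
            rw [h2]
            exact ih
      rw [hall k, hall 1]
    · have hn2 : 2 ≤ n := by omega
      set r := k % n with hr
      have hkr : k = r + (k / n) * n := by
        rw [hr]
        exact (Nat.mod_add_div' k n).symm
      have hDkr : D k = D r := by rw [hkr, hDperq]
      have hgr : Nat.gcd r n = 1 := by
        rw [hr, ← Nat.gcd_rec, Nat.gcd_comm]
        exact hk
      have hr0 : r ≠ 0 := by
        intro h0
        rw [h0, Nat.gcd_zero_left] at hgr
        omega
      obtain ⟨m, -, hm⟩ := Nat.exists_mul_mod_eq_one_of_coprime hk (by omega)
      have hm1 : 1 ≤ m := by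
        rcases Nat.eq_zero_or_pos m with h0 | h0
        · rw [h0, Nat.mul_zero, Nat.zero_mod] at hm; omega
        · exact h0
      have hkm : k * m = 1 + (k * m / n) * n := by
        have h3 := Nat.mod_add_div' (k * m) n
        rw [hm] at h3
        exact h3.symm
      have hD1km : D 1 = D (k * m) := by rw [hkm, hDperq]
      refine le_antisymm ?_ ?_
      · rw [hD1km, show k * m = m * k from by ring]
        exact hDmul k m hm1
      · rw [hDkr]
        have := hDmul 1 r (by omega)
        rw [mul_one] at this
        exact this
  -- reduce the goal to the claim
  have hgoal1 : logDist v (φ P) P = D 1 := by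
    rw [hD]
    simp only []
    rw [Function.iterate_one]
  rw [hgoal1]
  rcases le_total j i with hji | hij'
  · have hij2 : i = (i - j) + j := by omega
    have h1 : logDist v (φ^[i] P) (φ^[j] P) = D (i - j) := by
      conv_lhs => rw [hij2]
      exact hred (i - j) j
    rw [h1]
    refine claim (i - j) ?_
    have : ((i:ℤ) - (j:ℤ)) = ((i - j : ℕ) : ℤ) := by omega
    rw [this] at hij
    rwa [Int.gcd_natCast_natCast] at hij
  · have hij2 : j = (j - i) + i := by omega
    have h1 : logDist v (φ^[i] P) (φ^[j] P) = D (j - i) := by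
      rw [logDist_comm v hvfin hvmul]
      conv_lhs => rw [hij2]
      exact hred (j - i) i
    rw [h1]
    refine claim (j - i) ?_
    have : ((j:ℤ) - (i:ℤ)) = ((j - i : ℕ) : ℤ) := by omega
    have h2 : Int.gcd ((j:ℤ) - (i:ℤ)) (n:ℤ) = 1 := by
      rw [show (j:ℤ) - (i:ℤ) = -((i:ℤ) - (j:ℤ)) from by ring, Int.neg_gcd]
      exact hij
    rw [this] at h2
    rwa [Int.gcd_natCast_natCast] at h2

lemma evalPair_coeff_smul {K : Type} [Field K] (d : ℕ) (a b : Fin (d+1) → K) (u : K)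
    (Q : K × K) :
    evalPair d (fun i => u * a i) (fun i => u * b i) Q = u • evalPair d a b Q := by
  unfold evalPair
  have key : ∀ (f : Fin (d+1) → K),
      ∑ i : Fin (d+1), (u * f i) * Q.1^(i:ℕ) * Q.2^(d-(i:ℕ))
      = u * ∑ i : Fin (d+1), f i * Q.1^(i:ℕ) * Q.2^(d-(i:ℕ)) := by
    intro f
    rw [Finset.mul_sum]
    exact Finset.sum_congr rfl fun i _ => by ring
  rw [key a, key b]
  rfl

/-- Let `φ` be a morphism of `ℙ¹` defined over `K` with good reduction at the place
`v`, and let `P ∈ ℙ¹(K)` be a periodic point of `φ` with minimal period `n`.  If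
`i, j ∈ ℕ` satisfy `gcd(i − j, n) = 1`, then `δ_v(φ^i(P), φ^j(P)) = δ_v(φ(P), P)`. -/
theorem logDist_iterate_coprime {K : Type} [Field K] (v : K → WithTop ℤ)
    (hv0 : v 0 = ⊤) (hvfin : ∀ x : K, x ≠ 0 → v x ≠ ⊤)
    (hvmul : ∀ x y : K, v (x * y) = v x + v y)
    (hvadd : ∀ x y : K, min (v x) (v y) ≤ v (x + y))
    (hvdisc : ∀ n : ℤ, ∃ x : K, v x = (n : WithTop ℤ))
    (d : ℕ) (hd : 1 ≤ d) (a b : Fin (d+1) → K)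
    (hgood : GoodReduction v d a b)
    (P : K × K) (hP : P ≠ (0, 0)) (n : ℕ) (hn : 0 < n)
    (hper : ∃ c : K, c ≠ 0 ∧ (evalPair d a b)^[n] P = c • P)
    (hmin : ∀ m : ℕ, 0 < m →
      (∃ c : K, c ≠ 0 ∧ (evalPair d a b)^[m] P = c • P) → n ≤ m)
    (i j : ℕ) (hij : Int.gcd ((i : ℤ) - (j : ℤ)) (n : ℤ) = 1) :
    logDist v ((evalPair d a b)^[i] P) ((evalPair d a b)^[j] P) =
      logDist v (evalPair d a b P) P := by
  obtain ⟨u, hu, hint, -, hres⟩ := hgood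
  obtain ⟨c, hc, hcyc⟩ := hper
  set φ := evalPair d a b with hφ
  set ψ := evalPair d (fun i => u * a i) (fun i => u * b i) with hψ
  have hAB : ∀ Q, ψ Q = u • φ Q := fun Q => evalPair_coeff_smul d a b u Q
  have hiter : ∀ k : ℕ, ∃ e : K, e ≠ 0 ∧ ψ^[k] P = e • φ^[k] P := by
    intro k
    induction k with
    | zero => exact ⟨1, one_ne_zero, (one_smul _ _).symm⟩
    | succ k ih =>
        obtain ⟨e, he, heq⟩ := ih
        refine ⟨u * e ^ d, mul_ne_zero hu (pow_ne_zero _ he), ?_⟩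
        rw [Function.iterate_succ_apply' ψ k P, Function.iterate_succ_apply' φ k P,
          heq, hAB, hφ, evalPair_smul, smul_smul]
  obtain ⟨en, hen, heqn⟩ := hiter n
  have hcyc' : ψ^[n] P = (en * c) • P := by
    rw [heqn, hcyc, smul_smul]
  have main := main_normalized v hv0 hvfin hvmul hvadd hvdisc d hd
    (fun i => u * a i) (fun i => u * b i) hint hres P hP n hn
    (en * c) (mul_ne_zero hen hc) hcyc' i j hij
  obtain ⟨ei, hei, heqi⟩ := hiter i
  obtain ⟨ej, hej, heqj⟩ := hiter j
  rw [heqi, heqj] at main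
  rw [show evalPair d (fun i => u * a i) (fun i => u * b i) P = u • φ P from hAB P,
    logDist_smul_left v hvfin hvmul hei,
    logDist_smul_right v hvfin hvmul hej,
    logDist_smul_left v hvfin hvmul hu] at main
  exact main
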